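/- If G is a finite group that is a subdirect product of finitely many anabelian finite groups (i.e., G embeds in a direct product of anabelian groups with surjective projections onto each factor), then G is anabelian, i.e., every composition factor of G is non-abelian. -/

import Mathlib

/-- A subgroup `H ≤ G` is subnormal if there is a chain `H = H₀ ⊴ H₁ ⊴ ⋯ ⊴ Hₖ = G`. -/
def IsSubnormal {G : Type*} [Group G] (H : Subgroup G) : Prop :=
  ∃ (n : ℕ) (c : Fin (n + 1) → Subgroup G), c 0 = H ∧ c (Fin.last n) = ⊤ ∧
    ∀ i : Fin n, c i.castSucc ≤ c i.succ ∧
      ((c i.castSucc).subgroupOf (c i.succ)).Normal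

/-- A group is anabelian if all of its composition factors are non-abelian:
every simple quotient of a subnormal subgroup is non-abelian. -/
def IsAnabelian (G : Type*) [Group G] : Prop :=
  ∀ (H : Subgroup G) (N : Subgroup H) (hN : N.Normal), IsSubnormal H →
    letI := hN
    IsSimpleGroup (H ⧸ N) → ¬ (∀ a b : H ⧸ N, a * b = b * a)

section Aux

variable {G : Type*} [Group G]

/-- One step of subnormality, phrased elementwise. -/
def SnRel (A B : Subgroup G) : Prop :=
  A ≤ B ∧ ∀ a ∈ A, ∀ b ∈ B, b * a * b⁻¹ ∈ A

theorem snRel_normal {A B : Subgroup G} (h : ∀ a ∈ A, ∀ b ∈ B, b * a * b⁻¹ ∈ A) :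
    ((A.subgroupOf B)).Normal := by
  constructor
  rintro ⟨n, hn⟩ hmem ⟨g, hg⟩
  simp only [Subgroup.mem_subgroupOf] at hmem ⊢
  exact h n hmem g hg

theorem snRel_of_normal {A B : Subgroup G} (hle : A ≤ B) (hn : (A.subgroupOf B).Normal) :
    SnRel A B := by
  refine ⟨hle, fun a ha b hb => ?_⟩
  have := hn.conj_mem ⟨a, hle ha⟩ (by simpa [Subgroup.mem_subgroupOf] using ha) ⟨b, hb⟩
  simpa [Subgroup.mem_subgroupOf] using this

theorem reflTransGen_of_chain :
    ∀ (n : ℕ) (c : Fin (n + 1) → Subgroup G),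
      (∀ i : Fin n, c i.castSucc ≤ c i.succ ∧ ((c i.castSucc).subgroupOf (c i.succ)).Normal) →
      Relation.ReflTransGen SnRel (c 0) (c (Fin.last n)) := by
  intro n
  induction n with
  | zero =>
    intro c _
    exact Relation.ReflTransGen.refl
  | succ n ih =>
    intro c hc
    have h0 := hc 0
    have step : SnRel (c 0) (c 1) := by
      have := snRel_of_normal h0.1 h0.2
      simpa using this
    have tail := ih (fun i => c i.succ) (fun i => by
      have h := hc i.succ
      rw [← Fin.succ_castSucc] at h
      exact h)
    exact Relation.ReflTransGen.head step (by simpa [Fin.succ_last] using tail)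

theorem chain_of_reflTransGen {A B : Subgroup G} (h : Relation.ReflTransGen SnRel A B) :
    ∃ (n : ℕ) (c : Fin (n + 1) → Subgroup G), c 0 = A ∧ c (Fin.last n) = B ∧
      ∀ i : Fin n, c i.castSucc ≤ c i.succ ∧ ((c i.castSucc).subgroupOf (c i.succ)).Normal := by
  induction h with
  | refl => exact ⟨0, fun _ => A, rfl, rfl, fun i => i.elim0⟩
  | @tail B C hAB hBC ih =>
    obtain ⟨n, c, h0, hlast, hstep⟩ := ih
    refine ⟨n + 1, Fin.snoc c C, ?_, ?_, ?_⟩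
    · rw [show (0 : Fin (n + 2)) = Fin.castSucc 0 from rfl, Fin.snoc_castSucc]
      exact h0
    · simp
    · intro i
      induction i using Fin.lastCases with
      | last =>
        rw [show (Fin.last n).succ = Fin.last (n+1) from Fin.succ_last n, Fin.snoc_castSucc,
          Fin.snoc_last, hlast]
        exact ⟨hBC.1, snRel_normal hBC.2⟩
      | cast j =>
        rw [Fin.succ_castSucc, Fin.snoc_castSucc, Fin.snoc_castSucc]
        exact hstep j

theorem isSubnormal_iff_rtg {S : Subgroup G} :
    IsSubnormal S ↔ Relation.ReflTransGen SnRel S ⊤ := by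
  constructor
  · rintro ⟨n, c, h0, hl, hc⟩
    have := reflTransGen_of_chain n c hc
    rwa [h0, hl] at this
  · intro h
    obtain ⟨n, c, h0, hl, hc⟩ := chain_of_reflTransGen h
    exact ⟨n, c, h0, hl, hc⟩

theorem rtg_map {G' : Type*} [Group G'] (φ : G →* G') (hφ : Function.Surjective φ)
    {S : Subgroup G} (h : Relation.ReflTransGen SnRel S ⊤) :
    Relation.ReflTransGen SnRel (S.map φ) ⊤ := by
  have hstep : ∀ A B : Subgroup G, SnRel A B → SnRel (A.map φ) (B.map φ) := by
    intro A B hAB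
    refine ⟨Subgroup.map_mono hAB.1, ?_⟩
    rintro a ha b hb
    obtain ⟨a₀, ha₀, rfl⟩ := ha
    obtain ⟨b₀, hb₀, rfl⟩ := hb
    have : φ b₀ * φ a₀ * (φ b₀)⁻¹ = φ (b₀ * a₀ * b₀⁻¹) := by
      simp [map_mul, map_inv]
    rw [this]
    exact Subgroup.mem_map_of_mem φ (hAB.2 a₀ ha₀ b₀ hb₀)
  have key : Relation.ReflTransGen SnRel (S.map φ) (Subgroup.map φ ⊤) :=
    Relation.ReflTransGen.lift (Subgroup.map φ) (fun A B h => hstep A B h) _ _ h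
  rwa [Subgroup.map_top_of_surjective φ hφ] at key

theorem rtg_inf {N : Subgroup G} (hN : N.Normal) {S : Subgroup G}
    (h : Relation.ReflTransGen SnRel S ⊤) :
    Relation.ReflTransGen SnRel (S ⊓ N) ⊤ := by
  have h1 : Relation.ReflTransGen SnRel (S ⊓ N) (⊤ ⊓ N) := by
    refine Relation.ReflTransGen.lift (fun A => A ⊓ N) (fun A B hAB => ?_) _ _ h
    refine ⟨inf_le_inf_right N hAB.1, ?_⟩
    intro a ha b hb
    rw [Subgroup.mem_inf] at ha hb ⊢
    exact ⟨hAB.2 a ha.1 b hb.1, hN.conj_mem a ha.2 b⟩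
  rw [top_inf_eq] at h1
  exact h1.tail ⟨le_top, fun a ha b _ => hN.conj_mem a ha b⟩

theorem commutator_subgroup_eq_self_iff {S : Subgroup G} :
    ⁅S, S⁆ = S ↔ commutator ↥S = ⊤ := by
  have hmap : Subgroup.map S.subtype (commutator ↥S) = ⁅S, S⁆ := by
    rw [commutator_def, Subgroup.map_commutator, ← MonoidHom.range_eq_map, S.range_subtype]
  constructor
  · intro h
    apply Subgroup.map_injective S.subtype_injective
    rw [hmap, h, ← MonoidHom.range_eq_map, S.range_subtype]
  · intro h
    rw [← hmap, h, ← MonoidHom.range_eq_map, S.range_subtype]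

theorem anabelian_of_allPerfect (hp : ∀ S : Subgroup G, IsSubnormal S → ⁅S, S⁆ = S) :
    IsAnabelian G := by
  intro S N hN hsub hsimple hcomm
  haveI := hN
  have hc : commutator ↥S = ⊤ := commutator_subgroup_eq_self_iff.mp (hp S hsub)
  have hle : commutator ↥S ≤ N := by
    rw [commutator_def, Subgroup.commutator_le]
    intro a _ b _
    rw [← QuotientGroup.eq_one_iff (N := N), ← QuotientGroup.mk'_apply,
      map_commutatorElement, commutatorElement_eq_one_iff_mul_comm]
    exact hcomm _ _
  rw [hc, top_le_iff] at hle
  subst hle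
  haveI := QuotientGroup.subsingleton_quotient_top (G := ↥S)
  exact false_of_nontrivial_of_subsingleton (↥S ⧸ (⊤ : Subgroup ↥S))

theorem commutator_subgroup_le_self (S : Subgroup G) : ⁅S, S⁆ ≤ S := by
  rw [Subgroup.commutator_le]
  intro g₁ h₁ g₂ h₂
  show g₁ * g₂ * g₁⁻¹ * g₂⁻¹ ∈ S
  exact S.mul_mem (S.mul_mem (S.mul_mem h₁ h₂) (S.inv_mem h₁)) (S.inv_mem h₂)

open scoped commutatorElement in
theorem allPerfect_of_anabelian [Finite G] (ha : IsAnabelian G) :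
    ∀ S : Subgroup G, IsSubnormal S → ⁅S, S⁆ = S := by
  intro S hsub
  rw [commutator_subgroup_eq_self_iff]
  by_contra hne
  obtain ⟨N, ⟨hNnormal, hNle, hNne⟩, hmax⟩ :=
    Set.Finite.exists_maximalFor id
      {N : Subgroup ↥S | N.Normal ∧ commutator ↥S ≤ N ∧ N ≠ ⊤} (Set.toFinite _)
      ⟨commutator ↥S, Subgroup.commutator_normal ⊤ ⊤, le_rfl, hne⟩
  haveI := hNnormal
  have hab : ∀ a b : ↥S ⧸ N, a * b = b * a := by
    intro a b
    induction a using QuotientGroup.induction_on with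
    | H x =>
    induction b using QuotientGroup.induction_on with
    | H y =>
    show QuotientGroup.mk (x * y) = QuotientGroup.mk (y * x)
    rw [QuotientGroup.eq]
    have hmem : ⁅y⁻¹, x⁻¹⁆ ∈ commutator ↥S := by
      rw [commutator_def]
      exact Subgroup.commutator_mem_commutator (Subgroup.mem_top _) (Subgroup.mem_top _)
    have : (x * y)⁻¹ * (y * x) = ⁅y⁻¹, x⁻¹⁆ := by
      show _ = y⁻¹ * x⁻¹ * y⁻¹⁻¹ * x⁻¹⁻¹
      group
    rw [this]
    exact hNle hmem
  have hsimple : IsSimpleGroup (↥S ⧸ N) := by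
    haveI hnontriv : Nontrivial (↥S ⧸ N) := by
      obtain ⟨x, hx⟩ : ∃ x : ↥S, x ∉ N := by
        by_contra hcon
        push_neg at hcon
        exact hNne ((Subgroup.eq_top_iff' N).mpr hcon)
      exact ⟨QuotientGroup.mk x, 1, by
        rw [Ne, QuotientGroup.eq_one_iff]
        exact hx⟩
    constructor
    intro Q hQ
    set P := Q.comap (QuotientGroup.mk' N) with hP
    have hPnormal : P.Normal := hQ.comap _
    have hNP : N ≤ P := by
      intro x hx
      show QuotientGroup.mk' N x ∈ Q
      rw [QuotientGroup.mk'_apply, QuotientGroup.eq_one_iff x |>.mpr hx]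
      exact Q.one_mem
    have hQmap : Q = P.map (QuotientGroup.mk' N) :=
      (Subgroup.map_comap_eq_self_of_surjective (QuotientGroup.mk'_surjective N) Q).symm
    by_cases hPtop : P = ⊤
    · right
      rw [hQmap, hPtop, ← MonoidHom.range_eq_map]
      exact MonoidHom.range_eq_top_of_surjective _ (QuotientGroup.mk'_surjective N)
    · left
      have hPeq : N = P := le_antisymm hNP (hmax (j := P) ⟨hPnormal, hNle.trans hNP, hPtop⟩ hNP)
      rw [hQmap, ← hPeq]
      rw [eq_bot_iff]
      rintro q ⟨y, hy, rfl⟩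
      rw [Subgroup.mem_bot, QuotientGroup.mk'_apply, QuotientGroup.eq_one_iff]
      exact hy
  exact ha S N hNnormal hsub hsimple hab

end Aux

theorem key_subdirect : ∀ (t : ℕ) (H : Fin t → Type*) [inst : ∀ i, Group (H i)],
    (∀ i, ∀ S : Subgroup (H i), IsSubnormal S → ⁅S, S⁆ = S) →
    ∀ (G : Type*) [Group G] (f : G →* ∀ i, H i),
      (∀ i, Function.Surjective fun g => f g i) →
      ∀ S : Subgroup G, IsSubnormal S → S ≤ ⁅S, S⁆ ⊔ (S ⊓ f.ker) := by
  intro t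
  induction t with
  | zero =>
    intro H _ _ G _ f _ S _
    refine le_trans ?_ le_sup_right
    refine le_inf le_rfl ?_
    intro x _
    show f x = 1
    exact Subsingleton.elim _ _
  | succ t ih =>
    intro H _ hH G _ f hsurj S hS
    set g : G →* ∀ i : Fin t, H i.succ :=
      { toFun := fun x i => f x i.succ
        map_one' := by funext i; simp
        map_mul' := fun a b => by funext i; simp } with hg
    have hgsurj : ∀ i, Function.Surjective fun x => g x i := by
      intro i y
      obtain ⟨x, hx⟩ := hsurj i.succ y
      exact ⟨x, hx⟩
    have IH := ih (fun i => H i.succ) (fun i => hH i.succ) G g hgsurj S hS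
    set K := S ⊓ g.ker with hK
    have hKrtg : Relation.ReflTransGen SnRel K ⊤ :=
      rtg_inf (MonoidHom.normal_ker g) (isSubnormal_iff_rtg.mp hS)
    set π : G →* H 0 := (Pi.evalMonoidHom H 0).comp f with hπdef
    have hπ : Function.Surjective π := hsurj 0
    have hM : ⁅K.map π, K.map π⁆ = K.map π :=
      hH 0 _ (isSubnormal_iff_rtg.mpr (rtg_map π hπ hKrtg))
    have hKle : K ≤ ⁅S, S⁆ ⊔ (S ⊓ f.ker) := by
      intro x hx
      have hx' : π x ∈ Subgroup.map π ⁅K, K⁆ := by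
        rw [Subgroup.map_commutator, hM]
        exact Subgroup.mem_map_of_mem π hx
      obtain ⟨y, hy, hyx⟩ := hx'
      have hyK : y ∈ S ∧ y ∈ g.ker := Subgroup.mem_inf.mp (commutator_subgroup_le_self K hy)
      have hyS : y ∈ ⁅S, S⁆ := Subgroup.commutator_mono inf_le_left inf_le_left hy
      have hxm : x ∈ S ∧ x ∈ g.ker := Subgroup.mem_inf.mp hx
      have hxS : x ∈ S := hxm.1
      have hxk : y⁻¹ * x ∈ S ⊓ f.ker := by
        rw [Subgroup.mem_inf]
        constructor
        · exact S.mul_mem (S.inv_mem hyK.1) hxS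
        · show f (y⁻¹ * x) = 1
          funext i
          induction i using Fin.cases with
          | zero =>
            show π (y⁻¹ * x) = 1
            rw [map_mul, map_inv, hyx, inv_mul_cancel]
          | succ j =>
            have h1 : g x = 1 := hxm.2
            have h2 : g y = 1 := hyK.2
            have : g (y⁻¹ * x) = 1 := by rw [map_mul, map_inv, h1, h2]; simp
            calc f (y⁻¹ * x) j.succ = g (y⁻¹ * x) j := rfl
              _ = 1 := by rw [this]; rfl
      have hsl : ⁅S, S⁆ ≤ ⁅S, S⁆ ⊔ (S ⊓ f.ker) := le_sup_left
      have hsr : S ⊓ f.ker ≤ ⁅S, S⁆ ⊔ (S ⊓ f.ker) := le_sup_right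
      have hxeq : x = y * (y⁻¹ * x) := by group
      rw [hxeq]
      exact Subgroup.mul_mem _ (hsl hyS) (hsr hxk)
    exact IH.trans (sup_le le_sup_left hKle)

/-- A finite subdirect product of anabelian finite groups is anabelian. -/
theorem subdirect_product_anabelian {t : ℕ} (H : Fin t → Type*)
    [∀ i, Group (H i)] [∀ i, Finite (H i)] (hH : ∀ i, IsAnabelian (H i))
    (G : Type*) [Group G] [Finite G] (f : G →* ∀ i, H i)
    (hinj : Function.Injective f)
    (hsurj : ∀ i, Function.Surjective ((Pi.evalMonoidHom H i).comp f)) :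
    IsAnabelian G := by
  apply anabelian_of_allPerfect
  intro S hS
  have h1 : S ≤ ⁅S, S⁆ ⊔ (S ⊓ f.ker) :=
    key_subdirect t H (fun i => allPerfect_of_anabelian (hH i)) G f (fun i => hsurj i) S hS
  have hker : f.ker = ⊥ := (MonoidHom.ker_eq_bot_iff f).mpr hinj
  rw [hker, inf_bot_eq, sup_bot_eq] at h1
  exact le_antisymm (commutator_subgroup_le_self S) h1
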